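/- Let ρ, σ, τ > 0. Then the pushforward of the product measure AL(ρ,σ) ⊗ AL(ρ+σ,τ) under the involution F_{AL,AL}(x,y) = (min(0,x) − y, min(0, min(x,y)) − x − y) equals the product measure AL(τ,σ) ⊗ AL(σ+τ,ρ); that is, the quadruple (μ, ν, μ̃, ν̃) = (AL(ρ,σ), AL(ρ+σ,τ), AL(τ,σ), AL(σ+τ,ρ)) satisfies the detailed balance condition F_{AL,AL}(μ × ν) = μ̃ × ν̃. -/
import Mathlib

open MeasureTheory

/-- The asymmetric Laplace distribution `AL(λ₁,λ₂)`, with density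
`(λ₁λ₂/(λ₁+λ₂)) e^{−λ₁x}` for `x > 0` and `(λ₁λ₂/(λ₁+λ₂)) e^{λ₂x}` for `x ≤ 0`. -/
noncomputable def AL (l₁ l₂ : ℝ) : Measure ℝ :=
  volume.withDensity fun x =>
    ENNReal.ofReal
      (if 0 < x then l₁ * l₂ / (l₁ + l₂) * Real.exp (-l₁ * x)
        else l₁ * l₂ / (l₁ + l₂) * Real.exp (l₂ * x))

/-- The involution `F_{AL,AL}(x,y) = (min(0,x) − y, min(0, min(x,y)) − x − y)`. -/
noncomputable def FALAL : ℝ × ℝ → ℝ × ℝ :=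
  fun p => (min 0 p.1 - p.2, min 0 (min p.1 p.2) - p.1 - p.2)

namespace StmtAux

/-- A closed form for the density of `AL l₁ l₂`. -/
noncomputable def dens (l₁ l₂ : ℝ) (x : ℝ) : ENNReal :=
  ENNReal.ofReal (l₁ * l₂ / (l₁ + l₂) * Real.exp ((l₁ + l₂) * min 0 x - l₁ * x))

lemma dens_measurable (l₁ l₂ : ℝ) : Measurable (dens l₁ l₂) := by
  apply Measurable.ennreal_ofReal
  fun_prop

lemma AL_eq (l₁ l₂ : ℝ) : AL l₁ l₂ = volume.withDensity (dens l₁ l₂) := by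
  unfold AL
  congr 1
  funext x
  unfold dens
  rcases lt_or_ge 0 x with h | h
  · rw [if_pos h, min_eq_left h.le]
    ring_nf
  · rw [if_neg (not_lt.mpr h), min_eq_right h]
    ring_nf

set_option maxHeartbeats 1000000 in
lemma expid (ρ σ τ x y : ℝ) (hρ : 0 < ρ) (hσ : 0 < σ) (hτ : 0 < τ) :
    (τ + σ) * min 0 (min 0 x - y) - τ * (min 0 x - y)
      + (σ + τ + ρ) * min 0 (min 0 (min x y) - x - y) - (σ + τ) * (min 0 (min x y) - x - y)
    = (ρ + σ) * min 0 x - ρ * x + (ρ + σ + τ) * min 0 y - (ρ + σ) * y := by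
  rcases le_total 0 x with hx | hx <;> rcases le_total 0 y with hy | hy <;>
    rcases le_total x y with hxy | hxy <;>
    simp only [min_def] <;> split_ifs <;>
    first
      | ring1
      | linarith
      | nlinarith [hρ, hσ, hτ]

lemma densid (ρ σ τ : ℝ) (hρ : 0 < ρ) (hσ : 0 < σ) (hτ : 0 < τ) (p : ℝ × ℝ) :
    dens τ σ (FALAL p).1 * dens (σ + τ) ρ (FALAL p).2
      = dens ρ σ p.1 * dens (ρ + σ) τ p.2 := by
  obtain ⟨x, y⟩ := p
  have h1 : (0:ℝ) < τ * σ / (τ + σ) := by positivity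
  have h2 : (0:ℝ) < ρ * σ / (ρ + σ) := by positivity
  unfold dens FALAL
  simp only
  rw [← ENNReal.ofReal_mul (by positivity), ← ENNReal.ofReal_mul (by positivity)]
  congr 1
  rw [mul_mul_mul_comm, mul_mul_mul_comm (ρ * σ / (ρ + σ)), ← Real.exp_add, ← Real.exp_add]
  have hc : τ * σ / (τ + σ) * ((σ + τ) * ρ / (σ + τ + ρ))
      = ρ * σ / (ρ + σ) * ((ρ + σ) * τ / (ρ + σ + τ)) := by
    have : τ + σ ≠ 0 := by positivity
    have : σ + τ + ρ ≠ 0 := by positivity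
    have : ρ + σ ≠ 0 := by positivity
    have : ρ + σ + τ ≠ 0 := by positivity
    field_simp
    ring
  rw [hc]
  congr 1
  rw [Real.exp_eq_exp]
  have := expid ρ σ τ x y hρ hσ hτ
  linarith

lemma F_closed_form :
    FALAL = fun p : ℝ × ℝ => (min 0 p.1 - p.2, min 0 (min 0 p.1 - p.2) - p.1) := by
  funext p
  obtain ⟨x, y⟩ := p
  simp only [FALAL]
  refine Prod.ext rfl ?_
  simp only
  rcases le_total 0 x with hx | hx <;> rcases le_total 0 y with hy | hy <;>
    rcases le_total x y with hxy | hxy <;>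
    simp only [min_def] <;> split_ifs <;> linarith

lemma F_measurePreserving :
    MeasurePreserving FALAL ((volume : Measure ℝ).prod volume)
      ((volume : Measure ℝ).prod volume) := by
  have hA : MeasurePreserving (fun p : ℝ × ℝ => (p.1, p.2 - min 0 p.1))
      ((volume : Measure ℝ).prod volume) ((volume : Measure ℝ).prod volume) := by
    apply (MeasurePreserving.id volume).skew_product
      (g := fun x y => y - min 0 x) (by fun_prop)
    exact Filter.Eventually.of_forall fun x => (measurePreserving_sub_right volume (min 0 x)).map_eq
  have hB : MeasurePreserving (fun p : ℝ × ℝ => (-p.2, p.1))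
      ((volume : Measure ℝ).prod volume) ((volume : Measure ℝ).prod volume) := by
    have hswap : MeasurePreserving (Prod.swap : ℝ × ℝ → ℝ × ℝ)
        ((volume : Measure ℝ).prod volume) ((volume : Measure ℝ).prod volume) :=
      Measure.measurePreserving_swap
    have hneg : MeasurePreserving (Prod.map (fun x : ℝ => -x) (id : ℝ → ℝ))
        ((volume : Measure ℝ).prod volume) ((volume : Measure ℝ).prod volume) :=
      (Measure.measurePreserving_neg volume).prod (MeasurePreserving.id volume)
    exact hneg.comp hswap
  have hC : MeasurePreserving (fun p : ℝ × ℝ => (p.1, min 0 p.1 - p.2))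
      ((volume : Measure ℝ).prod volume) ((volume : Measure ℝ).prod volume) := by
    apply (MeasurePreserving.id volume).skew_product
      (g := fun u x => min 0 u - x) (by fun_prop)
    exact Filter.Eventually.of_forall fun u => (Measure.measurePreserving_sub_left volume (min 0 u)).map_eq
  have : FALAL = (fun p : ℝ × ℝ => (p.1, min 0 p.1 - p.2)) ∘
      (fun p : ℝ × ℝ => (-p.2, p.1)) ∘ (fun p : ℝ × ℝ => (p.1, p.2 - min 0 p.1)) := by
    rw [F_closed_form]
    funext p
    simp only [Function.comp_apply]
    congr 1 <;> ring_nf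
  rw [this]
  exact hC.comp (hB.comp hA)

lemma prod_withDensity (f g : ℝ → ENNReal) (hf : Measurable f) (hg : Measurable g)
    [SigmaFinite (volume.withDensity f)] [SigmaFinite (volume.withDensity g)] :
    (volume.withDensity f).prod (volume.withDensity g)
      = ((volume : Measure ℝ).prod volume).withDensity fun p => f p.1 * g p.2 := by
  refine Measure.prod_eq fun s t hs ht => ?_
  rw [withDensity_apply _ (hs.prod ht), withDensity_apply _ hs, withDensity_apply _ ht,
    ← Measure.prod_restrict, lintegral_prod_mul hf.aemeasurable hg.aemeasurable]

end StmtAux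

/-- Proposition 4.4(b) (continuous case): the detailed balance condition for `F_{AL,AL}`
holds for the quadruple `(AL(ρ,σ), AL(ρ+σ,τ), AL(τ,σ), AL(σ+τ,ρ))`. -/
theorem stmt_15 (ρ σ τ : ℝ) (hρ : 0 < ρ) (hσ : 0 < σ) (hτ : 0 < τ) :
    Measure.map FALAL ((AL ρ σ).prod (AL (ρ + σ) τ)) = (AL τ σ).prod (AL (σ + τ) ρ) := by
  haveI i1 : SigmaFinite (volume.withDensity (StmtAux.dens ρ σ)) := by
    unfold StmtAux.dens; infer_instance
  haveI i2 : SigmaFinite (volume.withDensity (StmtAux.dens (ρ + σ) τ)) := by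
    unfold StmtAux.dens; infer_instance
  haveI i3 : SigmaFinite (volume.withDensity (StmtAux.dens τ σ)) := by
    unfold StmtAux.dens; infer_instance
  haveI i4 : SigmaFinite (volume.withDensity (StmtAux.dens (σ + τ) ρ)) := by
    unfold StmtAux.dens; infer_instance
  rw [StmtAux.AL_eq, StmtAux.AL_eq, StmtAux.AL_eq, StmtAux.AL_eq,
    StmtAux.prod_withDensity _ _ (StmtAux.dens_measurable _ _) (StmtAux.dens_measurable _ _),
    StmtAux.prod_withDensity _ _ (StmtAux.dens_measurable _ _) (StmtAux.dens_measurable _ _)]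
  have hF := StmtAux.F_measurePreserving
  have hm : Measurable fun p : ℝ × ℝ => StmtAux.dens τ σ p.1 * StmtAux.dens (σ + τ) ρ p.2 :=
    ((StmtAux.dens_measurable _ _).comp measurable_fst).mul
      ((StmtAux.dens_measurable _ _).comp measurable_snd)
  have key : (fun p : ℝ × ℝ => StmtAux.dens ρ σ p.1 * StmtAux.dens (ρ + σ) τ p.2)
      = fun p : ℝ × ℝ => StmtAux.dens τ σ (FALAL p).1 * StmtAux.dens (σ + τ) ρ (FALAL p).2 :=
    funext fun p => (StmtAux.densid ρ σ τ hρ hσ hτ p).symm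
  rw [key]
  ext s hs
  rw [Measure.map_apply hF.measurable hs, withDensity_apply _ (hF.measurable hs),
    withDensity_apply _ hs]
  exact hF.setLIntegral_comp_preimage hs hm
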